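/- Strengthening for the id probe: if t ⇒^{φ∪{x},μ}_{id(x)} t' in λ_sn+, then t ⇒^{φ,μ}_{id(x)} t' (necessarily with t' = t). -/
import Mathlib


inductive Tm : Type
  | var : ℕ → Tm
  | lam : ℕ → Tm → Tm
  | app : Tm → Tm → Tm
  | es  : ℕ → Tm → Tm → Tm
  deriving DecidableEq

/-- Meta-level substitution `t{x := u}`. -/
def subst (x : ℕ) (u : Tm) : Tm → Tm
  | .var y => if y = x then u else .var y
  | .lam y t => if y = x then .lam y t else .lam y (subst x u t)
  | .app t s => .app (subst x u t) (subst x u s)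
  | .es y t s =>
      if y = x then .es y t (subst x u s)
      else .es y (subst x u t) (subst x u s)

/-- Unfolding `t★`. -/
def unfold : Tm → Tm
  | .var x => .var x
  | .lam x t => .lam x (unfold t)
  | .app t u => .app (unfold t) (unfold u)
  | .es x t u => subst x (unfold u) (unfold t)

/-- β-reduction of the pure λ-calculus. -/
inductive Beta : Tm → Tm → Prop
  | beta (x : ℕ) (t u : Tm) : Beta (.app (.lam x t) u) (subst x u t)
  | appL {t t' : Tm} (u : Tm) : Beta t t' → Beta (.app t u) (.app t' u)
  | appR (t : Tm) {u u' : Tm} : Beta u u' → Beta (.app t u) (.app t u')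
  | lam (x : ℕ) {t t' : Tm} : Beta t t' → Beta (.lam x t) (.lam x t')

/-- Free variables. -/
def fv : Tm → Set ℕ
  | .var x => {x}
  | .lam x t => fv t \ {x}
  | .app t u => fv t ∪ fv u
  | .es x t u => (fv t \ {x}) ∪ fv u

/-- Rule kinds. -/
inductive Rule : Type
  | db : Rule
  | lsv : Rule
  | idr : ℕ → Rule
  | sub : ℕ → Tm → Rule

/-- Values are abstractions. -/
def IsValue : Tm → Prop := fun t => ∃ x b, t = .lam x b

/-- Structures under a set `φ` of frozen variables. -/
inductive Struct : Set ℕ → Tm → Prop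
  | var {φ x} : x ∈ φ → Struct φ (.var x)
  | app {φ t} (u : Tm) : Struct φ t → Struct φ (.app t u)
  | es {φ t} (x : ℕ) (u : Tm) : Struct φ t → Struct φ (.es x t u)
  | esS {φ t u} (x : ℕ) :
      Struct (insert x φ) t → Struct φ u → Struct φ (.es x t u)

/-- Auxiliary dB reduction (β at a distance). -/
inductive AuxDB : Tm → Tm → Prop
  | base (x : ℕ) (t u : Tm) : AuxDB (.app (.lam x t) u) (.es x t u)
  | sigma {t u s : Tm} (x : ℕ) (w : Tm) :
      AuxDB (.app t u) s → AuxDB (.app (.es x t w) u) (.es x s w)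

/-- Local normal forms `LNF φ ω μ t`. -/
inductive LNF : Set ℕ → Set ℕ → Bool → Tm → Prop
  | var {φ ω x} (μ : Bool) : x ∈ φ ∪ ω → LNF φ ω μ (.var x)
  | absTop {φ ω t} (x : ℕ) :
      LNF (insert x φ) ω true t → LNF φ ω true (.lam x t)
  | absBot {φ ω t} (x : ℕ) :
      LNF φ (insert x ω) false t → LNF φ ω false (.lam x t)
  | es {φ ω μ t} (x : ℕ) (u : Tm) : LNF φ ω μ t → LNF φ ω μ (.es x t u)
  | appPhi {φ ω μ t u} :
      LNF φ ω μ t → Struct φ t → LNF φ ω true u → LNF φ ω μ (.app t u)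
  | appOmega {φ ω μ t} (u : Tm) :
      LNF φ ω μ t → Struct ω t → LNF φ ω μ (.app t u)
  | esPhi {φ ω μ t u} (x : ℕ) :
      LNF (insert x φ) ω μ t → LNF φ ω false u → Struct φ u →
      LNF φ ω μ (.es x t u)
  | esOmega {φ ω μ t u} (x : ℕ) :
      LNF φ (insert x ω) μ t → Struct ω u → LNF φ ω μ (.es x t u)

mutual
/-- The reduction `t ⇒^{φ,μ}_ρ t'` of the restricted calculus λ_sn+
(identical to λ_sn except that lsv-base requires the substituted value to
be a local normal form). -/
inductive PRed : Rule → Set ℕ → Bool → Tm → Tm → Prop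
  | appLeft {ρ φ t t'} (μ : Bool) (u : Tm) :
      PRed ρ φ false t t' → PRed ρ φ μ (.app t u) (.app t' u)
  | appRight {ρ φ u u'} (μ : Bool) {t : Tm} :
      Struct φ t → PRed ρ φ true u u' → PRed ρ φ μ (.app t u) (.app t u')
  | absTop {ρ φ t t'} (x : ℕ) :
      PRed ρ (insert x φ) true t t' → PRed ρ φ true (.lam x t) (.lam x t')
  | absBot {ρ φ t t'} (x : ℕ) :
      PRed ρ φ false t t' → PRed ρ φ false (.lam x t) (.lam x t')
  | esLeft {ρ φ μ t t'} (x : ℕ) (u : Tm) :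
      PRed ρ φ μ t t' → PRed ρ φ μ (.es x t u) (.es x t' u)
  | esLeftS {ρ φ μ t t' u} (x : ℕ) :
      PRed ρ (insert x φ) μ t t' → Struct φ u →
      PRed ρ φ μ (.es x t u) (.es x t' u)
  | esRight {ρ φ μ u u'} (x : ℕ) {t : Tm} :
      PRed (.idr x) φ μ t t → PRed ρ φ false u u' →
      PRed ρ φ μ (.es x t u) (.es x t u')
  | idr (φ : Set ℕ) (μ : Bool) (x : ℕ) : PRed (.idr x) φ μ (.var x) (.var x)
  | sub (φ : Set ℕ) (μ : Bool) (x : ℕ) (v : Tm) : PRed (.sub x v) φ μ (.var x) v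
  | db {φ μ t t'} : AuxDB t t' → PRed .db φ μ t t'
  | lsv {φ μ t t'} : PAuxLSV φ μ t t' → PRed .lsv φ μ t t'

/-- Auxiliary lsv reduction of λ_sn+: the base case additionally requires
the substituted value to be in local normal form `LNF φ ∅ ⊥`. -/
inductive PAuxLSV : Set ℕ → Bool → Tm → Tm → Prop
  | base {φ μ t t'} (x : ℕ) {v : Tm} :
      PRed (.sub x v) φ μ t t' → IsValue v → LNF φ ∅ false v →
      PAuxLSV φ μ (.es x t v) (.es x t' v)
  | sigma {φ μ t u t'} (x y : ℕ) (w : Tm) :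
      PAuxLSV φ μ (.es x t u) t' →
      PAuxLSV φ μ (.es x t (.es y u w)) (.es y t' w)
  | sigmaS {φ μ t u t' w} (x y : ℕ) :
      PAuxLSV (insert y φ) μ (.es x t u) t' → Struct φ w →
      PAuxLSV φ μ (.es x t (.es y u w)) (.es y t' w)
end

/-- The variable a `sub`/`id` rule kind applies to, if any. -/
def Rule.varOf : Rule → Option ℕ
  | .db => none
  | .lsv => none
  | .idr x => some x
  | .sub x _ => some x

/-- An id-probe does not change the term. -/
theorem pred_idr_eq : ∀ {t : Tm} {x : ℕ} {φ : Set ℕ} {μ : Bool} {t' : Tm},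
    PRed (.idr x) φ μ t t' → t' = t := by
  intro t
  induction t with
  | var v =>
      intro x φ μ t' h
      cases h; rfl
  | lam z t1 ih =>
      intro x φ μ t' h
      cases h with
      | absTop _ h1 => rw [ih h1]
      | absBot _ h1 => rw [ih h1]
  | app t1 u ih1 ih2 =>
      intro x φ μ t' h
      cases h with
      | appLeft _ _ h1 => rw [ih1 h1]
      | appRight _ _ h2 => rw [ih2 h2]
  | es z t1 u ih1 ih2 =>
      intro x φ μ t' h
      cases h with
      | esLeft _ _ h1 => rw [ih1 h1]
      | esLeftS _ h1 _ => rw [ih1 h1]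
      | esRight _ _ h2 => rw [ih2 h2]

/-- If `t` is a structure under `insert x ψ` but not under `ψ`, then `t`
probes `x` at any frozen set. -/
theorem struct_probe : ∀ {t : Tm} {ψ : Set ℕ} {x : ℕ},
    Struct (insert x ψ) t → ¬ Struct ψ t →
    ∀ (φ : Set ℕ) (μ : Bool), PRed (.idr x) φ μ t t := by
  intro t
  induction t with
  | var v =>
      intro ψ x hs hn φ μ
      cases hs with
      | var hv =>
          rcases hv with h | h
          · subst h; exact PRed.idr φ μ v
          · exact absurd (Struct.var h) hn
  | lam z t1 _ =>
      intro ψ x hs hn φ μ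
      cases hs
  | app t1 u ih1 _ =>
      intro ψ x hs hn φ μ
      cases hs with
      | app _ h1 =>
          exact PRed.appLeft μ u (ih1 h1 (fun h => hn (Struct.app u h)) φ false)
  | es z t1 u ih1 ih2 =>
      intro ψ x hs hn φ μ
      cases hs with
      | es _ _ h1 =>
          exact PRed.esLeft z u (ih1 h1 (fun h => hn (Struct.es z u h)) φ μ)
      | esS _ h1 h2 =>
          by_cases hzt : Struct (insert z ψ) t1
          · have hnu : ¬ Struct ψ u := fun h => hn (Struct.esS z hzt h)
            have pt := ih1 hzt (fun h => hn (Struct.es z u h)) φ μ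
            exact PRed.esRight z pt (ih2 h2 hnu φ false)
          · have h1' : Struct (insert x (insert z ψ)) t1 := by
              rwa [Set.insert_comm] at h1
            exact PRed.esLeft z u (ih1 h1' hzt φ μ)

/-- Generalized strengthening: removing a frozen variable `y` either keeps
the `x`-probe or produces a `y`-probe. -/
theorem probe_strengthen : ∀ {t : Tm} {x y : ℕ} {φ : Set ℕ} {μ : Bool} {t' : Tm},
    PRed (.idr x) (insert y φ) μ t t' →
    PRed (.idr x) φ μ t t' ∨ PRed (.idr y) φ μ t t := by
  intro t
  induction t with
  | var v =>
      intro x y φ μ t' h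
      cases h
      exact Or.inl (PRed.idr φ μ v)
  | lam z t1 ih =>
      intro x y φ μ t' h
      cases h with
      | absTop _ h1 =>
          rw [Set.insert_comm] at h1
          rcases ih h1 with hl | hr
          · exact Or.inl (PRed.absTop z hl)
          · exact Or.inr (PRed.absTop z hr)
      | absBot _ h1 =>
          rcases ih h1 with hl | hr
          · exact Or.inl (PRed.absBot z hl)
          · exact Or.inr (PRed.absBot z hr)
  | app t1 u ih1 ih2 =>
      intro x y φ μ t' h
      cases h with
      | appLeft _ _ h1 =>
          rcases ih1 h1 with hl | hr
          · exact Or.inl (PRed.appLeft μ u hl)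
          · exact Or.inr (PRed.appLeft μ u hr)
      | appRight _ hS h2 =>
          by_cases hst : Struct φ t1
          · rcases ih2 h2 with hl | hr
            · exact Or.inl (PRed.appRight μ hst hl)
            · exact Or.inr (PRed.appRight μ hst hr)
          · exact Or.inr (PRed.appLeft μ u (struct_probe hS hst φ false))
  | es z t1 u ih1 ih2 =>
      intro x y φ μ t' h
      cases h with
      | esLeft _ _ h1 =>
          rcases ih1 h1 with hl | hr
          · exact Or.inl (PRed.esLeft z u hl)
          · exact Or.inr (PRed.esLeft z u hr)
      | esLeftS _ h1 hS =>
          rw [Set.insert_comm] at h1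
          by_cases hsu : Struct φ u
          · rcases ih1 h1 with hl | hr
            · exact Or.inl (PRed.esLeftS z hl hsu)
            · exact Or.inr (PRed.esLeftS z hr hsu)
          · have pu : PRed (.idr y) φ false u u := struct_probe hS hsu φ false
            rcases ih1 h1 with hl | hr
            · rcases ih1 hl with hll | hlr
              · exact Or.inl (PRed.esLeft z u hll)
              · exact Or.inr (PRed.esRight z hlr pu)
            · rcases ih1 hr with hrl | hrr
              · exact Or.inr (PRed.esLeft z u hrl)
              · exact Or.inr (PRed.esRight z hrr pu)
      | esRight _ h0 h2 =>
          rcases ih1 h0 with tl | tr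
          · rcases ih2 h2 with ul | ur
            · exact Or.inl (PRed.esRight z tl ul)
            · exact Or.inr (PRed.esRight z tl ur)
          · exact Or.inr (PRed.esLeft z u tr)

/-- Strengthening for the id probe. -/
theorem pred_id_strengthening {φ : Set ℕ} {μ : Bool} {x : ℕ} {t t' : Tm}
    (hred : PRed (.idr x) (insert x φ) μ t t') :
    PRed (.idr x) φ μ t t' := by
  rcases probe_strengthen hred with h | h
  · exact h
  · rw [pred_idr_eq hred]; exact h
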